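/- arXiv:2207.00832 — 3 statements merged into one kernel-verified Lean document; each statement's English description precedes it below -/
import Mathlib

section
/- Let n ≥ 2 be even and let x, y be distinct words in U_n. Then |B^D(x) ∩ B^D(y)| = |B^I(x) ∩ B^I(y)|. -/
namespace BRC

/-- Hamming distance between two binary words (of the same length). -/
def hammingDist (x y : List Bool) : ℕ :=
  (List.zip x y).countP (fun p => p.1 != p.2)

/-- `balanced n` is the set `U_n` of binary words of length `n` with exactly `n/2` ones. -/
def balanced (n : ℕ) : Set (List Bool) :=
  {x | x.length = n ∧ x.count true = n / 2}

/-- `B^S(x)`: words obtained from `x` by at most one substitution. -/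
def BS (x : List Bool) : Set (List Bool) :=
  {y | y.length = x.length ∧ hammingDist x y ≤ 1}

/-- `B^D(x)`: words obtained from `x` by deleting one symbol. -/
def BD (x : List Bool) : Set (List Bool) :=
  {y | ∃ (u v : List Bool) (b : Bool), x = u ++ b :: v ∧ y = u ++ v}

/-- `B^I(x)`: words obtained from `x` by inserting one symbol. -/
def BI (x : List Bool) : Set (List Bool) :=
  {y | ∃ (u v : List Bool) (b : Bool), x = u ++ v ∧ y = u ++ b :: v}

def BDI (x : List Bool) : Set (List Bool) := BD x ∪ BI x
def BSD (x : List Bool) : Set (List Bool) := BS x ∪ BD x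
def BSI (x : List Bool) : Set (List Bool) := BS x ∪ BI x
def Bedit (x : List Bool) : Set (List Bool) := BS x ∪ BD x ∪ BI x

/-- `C` is a balanced `(n,N;B)`-reconstruction code: `C ⊆ U_n` and `ν(C;B) < N`. -/
def reconCode (n N : ℕ) (B : List Bool → Set (List Bool)) (C : Set (List Bool)) : Prop :=
  C ⊆ balanced n ∧ ∀ x ∈ C, ∀ y ∈ C, x ≠ y → (B x ∩ B y).ncard < N

/-- `ρ_b(n,N;B)`: optimal redundancy of a balanced `(n,N;B)`-reconstruction code. -/
noncomputable def rho (n N : ℕ) (B : List Bool → Set (List Bool)) : ℝ :=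
  sInf {r : ℝ | ∃ C : Set (List Bool),
    reconCode n N B C ∧ r = (n : ℝ) - Real.logb 2 (C.ncard : ℝ)}

/-- `(10)^m`. -/
def pat10 (m : ℕ) : List Bool := (List.replicate m [true, false]).flatten
/-- `(01)^m`. -/
def pat01 (m : ℕ) : List Bool := (List.replicate m [false, true]).flatten

/-- Type-A-confusable with parameter `m`: `{c, c'} = {(10)^m, (01)^m}`. -/
def TypeAWith (m : ℕ) (x y : List Bool) : Prop :=
  ∃ u v : List Bool,
    (x = u ++ pat10 m ++ v ∧ y = u ++ pat01 m ++ v) ∨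
    (x = u ++ pat01 m ++ v ∧ y = u ++ pat10 m ++ v)

/-- Type-A-confusable (with some `m ≥ 1`). -/
def TypeA (x y : List Bool) : Prop := ∃ m, 1 ≤ m ∧ TypeAWith m x y

/-- Type-B-confusable with parameter `m`:
`{c, c'} = {0 1^m, 1^m 0}` or `{c, c'} = {1 0^m, 0^m 1}`. -/
def TypeBWith (m : ℕ) (x y : List Bool) : Prop :=
  ∃ u v : List Bool,
    ((x = u ++ (false :: List.replicate m true) ++ v ∧
        y = u ++ (List.replicate m true ++ [false]) ++ v) ∨
     (x = u ++ (List.replicate m true ++ [false]) ++ v ∧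
        y = u ++ (false :: List.replicate m true) ++ v)) ∨
    ((x = u ++ (true :: List.replicate m false) ++ v ∧
        y = u ++ (List.replicate m false ++ [true]) ++ v) ∨
     (x = u ++ (List.replicate m false ++ [true]) ++ v ∧
        y = u ++ (true :: List.replicate m false) ++ v))

/-- Type-B-confusable (with some `m ≥ 2`). -/
def TypeB (x y : List Bool) : Prop := ∃ m, 2 ≤ m ∧ TypeBWith m x y

/-- Number of runs of a binary word. -/
def numRuns (x : List Bool) : ℕ := (x.destutter (· ≠ ·)).length

/-- `V_{n-1}`: binary words of length `n-1` with Hamming weight `n/2` or `n/2 - 1`. -/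
def Vset (n : ℕ) : Set (List Bool) :=
  {x | x.length = n - 1 ∧ (x.count true = n / 2 ∨ x.count true = n / 2 - 1)}

/-- VT weighted sum `Σ_{i=1}^n i·x_i` (positions indexed from 1). -/
def vtSum (x : List Bool) : ℕ :=
  (x.zipIdx.map (fun p => if p.1 then p.2 + 1 else 0)).sum

/-- The balanced Varshamov–Tenengolts code `BVT_a(n)`. -/
def BVT (n a : ℕ) : Set (List Bool) :=
  {x | x ∈ balanced n ∧ vtSum x ≡ a [MOD n + 1]}

/-- `R_2^b(n,1,m)`: balanced words of length `n` all of whose runs have length at most `m`. -/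
def R1 (n m : ℕ) : Set (List Bool) :=
  {x | x ∈ balanced n ∧ ∀ b : Bool, ¬ (List.replicate (m + 1) b <:+: x)}


lemma cons_eq_concat : ∀ {t : List Bool} {b b' : Bool}, b :: t = t ++ [b'] →
    b' = b ∧ t = List.replicate t.length b := by
  intro t
  induction t with
  | nil =>
    intro b b' h
    simp only [List.nil_append, List.cons.injEq] at h
    exact ⟨h.1.symm, rfl⟩
  | cons c t ih =>
    intro b b' h
    simp only [List.cons_append, List.cons.injEq] at h
    obtain ⟨rfl, h2⟩ := h
    obtain ⟨hb', ht⟩ := ih h2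
    exact ⟨hb', by rw [List.length_cons, List.replicate_succ]; exact congrArg _ ht⟩

lemma mem_BD_cons_self (e : Bool) (x : List Bool) : x ∈ BD (e :: x) :=
  ⟨[], x, e, rfl, rfl⟩

lemma BD_cons (e : Bool) (x : List Bool) :
    BD (e :: x) = insert x ((e :: ·) '' BD x) := by
  ext z
  constructor
  · rintro ⟨u, v, c, h1, h2⟩
    cases u with
    | nil =>
      simp only [List.nil_append] at h1 h2
      injection h1 with h1a h1b
      subst h1b
      exact Or.inl h2
    | cons g u' =>
      simp only [List.cons_append] at h1
      injection h1 with h1a h1b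
      subst h1a
      exact Or.inr ⟨u' ++ v, ⟨u', v, c, h1b, rfl⟩, by simp [h2]⟩
  · rintro (rfl | ⟨t, ⟨u, v, c, h1, h2⟩, rfl⟩)
    · exact ⟨[], z, e, rfl, rfl⟩
    · exact ⟨e :: u, v, c, by simp [h1], by simp [h2]⟩

lemma BI_cons (e : Bool) (x : List Bool) :
    BI (e :: x) = insert ((!e) :: e :: x) ((e :: ·) '' BI x) := by
  ext z
  constructor
  · rintro ⟨u, v, c, h1, h2⟩
    cases u with
    | nil =>
      simp only [List.nil_append] at h1 h2
      subst h1
      by_cases hc : c = e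
      · subst hc
        exact Or.inr ⟨c :: x, ⟨[], x, c, rfl, rfl⟩, h2.symm⟩
      · left
        rw [h2]
        cases c <;> cases e <;> simp_all
    | cons g u' =>
      simp only [List.cons_append] at h1
      injection h1 with h1a h1b
      subst h1a
      exact Or.inr ⟨u' ++ c :: v, ⟨u', v, c, h1b, rfl⟩, by simp [h2]⟩
  · rintro (rfl | ⟨t, ⟨u, v, c, h1, h2⟩, rfl⟩)
    · exact ⟨[], e :: x, !e, rfl, rfl⟩
    · exact ⟨e :: u, v, c, by simp [h1], by simp [h2]⟩

lemma inter_cons_D (e : Bool) {x y : List Bool} (hxy : x ≠ y) :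
    BD (e :: x) ∩ BD (e :: y) = (e :: ·) '' (BD x ∩ BD y) := by
  rw [BD_cons, BD_cons]
  ext z
  constructor
  · rintro ⟨h1, h2⟩
    simp only [Set.mem_insert_iff, Set.mem_image] at h1 h2
    rcases h1 with h1 | ⟨t, ht, ht1⟩
    · rcases h2 with h2 | ⟨t', ht', ht2⟩
      · exact absurd (h1.symm.trans h2) hxy
      · have hx : x = e :: t' := by rw [← h1, ← ht2]
        exact ⟨t', ⟨by rw [hx]; exact mem_BD_cons_self e t', ht'⟩, ht2⟩
    · rcases h2 with h2 | ⟨t', ht', ht2⟩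
      · have hy : y = e :: t := by rw [← h2, ← ht1]
        exact ⟨t, ⟨ht, by rw [hy]; exact mem_BD_cons_self e t⟩, ht1⟩
      · have : e :: t = e :: t' := ht1.trans ht2.symm
        injection this with _ h
        subst h
        exact ⟨t, ⟨ht, ht'⟩, ht1⟩
  · rintro ⟨t, ⟨hh1, hh2⟩, rfl⟩
    exact ⟨Or.inr ⟨t, hh1, rfl⟩, Or.inr ⟨t, hh2, rfl⟩⟩

lemma inter_cons_I (e : Bool) {x y : List Bool} (hxy : x ≠ y) :
    BI (e :: x) ∩ BI (e :: y) = (e :: ·) '' (BI x ∩ BI y) := by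
  rw [BI_cons, BI_cons]
  ext z
  constructor
  · rintro ⟨h1, h2⟩
    simp only [Set.mem_insert_iff, Set.mem_image] at h1 h2
    rcases h1 with h1 | ⟨t, ht, ht1⟩
    · rcases h2 with h2 | ⟨t', ht', ht2⟩
      · exact absurd (by simpa using h1.symm.trans h2) hxy
      · exfalso
        have : e :: t' = (!e) :: e :: x := ht2.trans h1
        injection this with h _
        simp at h
    · rcases h2 with h2 | ⟨t', ht', ht2⟩
      · exfalso
        have : e :: t = (!e) :: e :: y := ht1.trans h2
        injection this with h _
        simp at h
      · have : e :: t = e :: t' := ht1.trans ht2.symm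
        injection this with _ h
        subst h
        exact ⟨t, ⟨ht, ht'⟩, ht1⟩
  · rintro ⟨t, ⟨hh1, hh2⟩, rfl⟩
    exact ⟨Or.inr ⟨t, hh1, rfl⟩, Or.inr ⟨t, hh2, rfl⟩⟩

lemma BD_reverse (x : List Bool) : BD x.reverse = List.reverse '' BD x := by
  ext z
  constructor
  · rintro ⟨u, v, c, h1, h2⟩
    refine ⟨v.reverse ++ u.reverse, ⟨v.reverse, u.reverse, c, ?_, rfl⟩, ?_⟩
    · apply List.reverse_injective
      simp [h1]
    · rw [h2]; simp
  · rintro ⟨t, ⟨u, v, c, h1, h2⟩, rfl⟩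
    exact ⟨v.reverse, u.reverse, c, by simp [h1], by simp [h2]⟩

lemma BI_reverse (x : List Bool) : BI x.reverse = List.reverse '' BI x := by
  ext z
  constructor
  · rintro ⟨u, v, c, h1, h2⟩
    refine ⟨v.reverse ++ c :: u.reverse, ⟨v.reverse, u.reverse, c, ?_, rfl⟩, ?_⟩
    · apply List.reverse_injective
      simp [h1]
    · rw [h2]; simp
  · rintro ⟨t, ⟨u, v, c, h1, h2⟩, rfl⟩
    exact ⟨v.reverse, u.reverse, c, by simp [h1], by simp [h2]⟩


lemma core_D {x y xt yt xi yi : List Bool} {a b a' b' : Bool}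
    (hx1 : x = a :: xt) (hy1 : y = b :: yt) (hx2 : x = xi ++ [a']) (hy2 : y = yi ++ [b'])
    (hab : a ≠ b) (hab' : a' ≠ b') :
    BD x ∩ BD y = {z | (xt = yi ∧ z = xt) ∨ (yt = xi ∧ z = yt)} := by
  subst hx1; subst hy1
  ext z
  constructor
  · rintro ⟨⟨u1, v1, c1, e1, f1⟩, ⟨u2, v2, c2, e2, f2⟩⟩
    have huv : u1 ++ v1 = u2 ++ v2 := f1.symm.trans f2
    rcases List.append_eq_append_iff.mp huv with ⟨w, hw1, hw2⟩ | ⟨w, hw1, hw2⟩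
    · subst hw1; subst hw2
      have hu1 : u1 = [] := by
        cases u1 with
        | nil => rfl
        | cons g u1' =>
          exfalso
          rw [List.cons_append] at e1
          rw [List.cons_append, List.cons_append] at e2
          injection e1 with h1 _
          injection e2 with h2 _
          exact hab (h1.trans h2.symm)
      subst hu1
      simp only [List.nil_append] at e1 e2 f1
      have hv2 : v2 = [] := by
        rcases List.eq_nil_or_concat v2 with h | ⟨v2', g, hv⟩
        · exact h
        · exfalso
          rw [List.concat_eq_append] at hv
          subst hv
          apply hab'
          have h1 : a' = g := by
            have e1' : a :: xt = (c1 :: (w ++ v2')) ++ [g] := by rw [e1]; simp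
            have := List.append_inj' (hx2.symm.trans e1') rfl
            injection this.2 with h _
          have h2 : b' = g := by
            have e2' : b :: yt = (w ++ c2 :: v2') ++ [g] := by rw [e2]; simp
            have := List.append_inj' (hy2.symm.trans e2') rfl
            injection this.2 with h _
          exact h1.trans h2.symm
      subst hv2
      simp only [List.append_nil] at e1 e2 f1
      injection e1 with h1 h2
      have h3 := List.append_inj' (hy2.symm.trans e2) rfl
      left
      refine ⟨?_, ?_⟩
      · rw [h2, h3.1]
      · rw [f1, h2]
    · subst hw1; subst hw2
      have hu2 : u2 = [] := by
        cases u2 with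
        | nil => rfl
        | cons g u2' =>
          exfalso
          rw [List.cons_append] at e2
          rw [List.cons_append, List.cons_append] at e1
          injection e1 with h1 _
          injection e2 with h2 _
          exact hab (h1.trans h2.symm)
      subst hu2
      simp only [List.nil_append] at e1 e2 f2
      have hv1 : v1 = [] := by
        rcases List.eq_nil_or_concat v1 with h | ⟨v1', g, hv⟩
        · exact h
        · exfalso
          rw [List.concat_eq_append] at hv
          subst hv
          apply hab'
          have h1 : a' = g := by
            have e1' : a :: xt = (w ++ c1 :: v1') ++ [g] := by rw [e1]; simp
            have := List.append_inj' (hx2.symm.trans e1') rfl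
            injection this.2 with h _
          have h2 : b' = g := by
            have e2' : b :: yt = (c2 :: (w ++ v1')) ++ [g] := by rw [e2]; simp
            have := List.append_inj' (hy2.symm.trans e2') rfl
            injection this.2 with h _
          exact h1.trans h2.symm
      subst hv1
      simp only [List.append_nil] at e1 e2 f2
      injection e2 with h1 h2
      have h3 := List.append_inj' (hx2.symm.trans e1) rfl
      right
      refine ⟨?_, ?_⟩
      · rw [h2, h3.1]
      · rw [f2, h2]
  · rintro (⟨hA, rfl⟩ | ⟨hB, rfl⟩)
    · exact ⟨⟨[], z, a, rfl, rfl⟩, ⟨yi, [], b', by simpa using hy2, by simp [hA]⟩⟩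
    · exact ⟨⟨xi, [], a', by simpa using hx2, by simp [hB]⟩, ⟨[], z, b, rfl, rfl⟩⟩

lemma core_I {x y xt yt xi yi : List Bool} {a b a' b' : Bool}
    (hx1 : x = a :: xt) (hy1 : y = b :: yt) (hx2 : x = xi ++ [a']) (hy2 : y = yi ++ [b'])
    (hab : a ≠ b) (hab' : a' ≠ b') :
    BI x ∩ BI y = {z | (xt = yi ∧ z = a :: y) ∨ (yt = xi ∧ z = b :: x)} := by
  have hy2' : b :: yt = yi ++ [b'] := hy1 ▸ hy2
  have hx2' : a :: xt = xi ++ [a'] := hx1 ▸ hx2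
  subst hx1; subst hy1
  ext z
  constructor
  · rintro ⟨⟨u1, v1, c1, e1, f1⟩, ⟨u2, v2, c2, e2, f2⟩⟩
    have huv : u1 ++ c1 :: v1 = u2 ++ c2 :: v2 := f1.symm.trans f2
    rcases List.append_eq_append_iff.mp huv with ⟨w, hw1, hw2⟩ | ⟨w, hw1, hw2⟩
    · cases w with
      | nil =>
        exfalso
        apply hab
        simp only [List.nil_append] at hw2
        simp only [List.append_nil] at hw1
        injection hw2 with hc hv
        rw [hw1, ← hv] at e2
        have := e1.trans e2.symm
        injection this with h _
      | cons g w' =>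
        rw [List.cons_append] at hw2
        injection hw2 with hg hv1
        subst hg; subst hv1; subst hw1
        have hu1 : u1 = [] := by
          cases u1 with
          | nil => rfl
          | cons g2 u1' =>
            exfalso
            rw [List.cons_append] at e1
            rw [List.cons_append, List.cons_append] at e2
            injection e1 with h1 _
            injection e2 with h2 _
            exact hab (h1.trans h2.symm)
        subst hu1
        simp only [List.nil_append] at e1 e2 f1
        have hv2 : v2 = [] := by
          rcases List.eq_nil_or_concat v2 with h | ⟨v2', g, hv⟩
          · exact h
          · exfalso
            rw [List.concat_eq_append] at hv
            subst hv
            apply hab'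
            have h1 : a' = g := by
              have e1' : a :: xt = (w' ++ c2 :: v2') ++ [g] := by rw [e1]; simp
              have := List.append_inj' (hx2'.symm.trans e1') rfl
              injection this.2 with h _
            have h2 : b' = g := by
              have e2' : b :: yt = (c1 :: (w' ++ v2')) ++ [g] := by rw [e2]; simp
              have := List.append_inj' (hy2'.symm.trans e2') rfl
              injection this.2 with h _
            exact h1.trans h2.symm
        subst hv2
        simp only [List.append_nil] at e1 e2 f1
        injection e2 with h1 h2
        have h3 := List.append_inj' (hx2'.symm.trans e1) rfl
        right
        refine ⟨?_, ?_⟩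
        · rw [h2, h3.1]
        · rw [f1, ← h1, ← e1]
    · cases w with
      | nil =>
        exfalso
        apply hab
        simp only [List.nil_append] at hw2
        simp only [List.append_nil] at hw1
        injection hw2 with hc hv
        rw [← hw1, hv] at e2
        have := e1.trans e2.symm
        injection this with h _
      | cons g w' =>
        rw [List.cons_append] at hw2
        injection hw2 with hg hv2
        subst hg; subst hv2; subst hw1
        have hu2 : u2 = [] := by
          cases u2 with
          | nil => rfl
          | cons g2 u2' =>
            exfalso
            rw [List.cons_append] at e2
            rw [List.cons_append, List.cons_append] at e1
            injection e1 with h1 _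
            injection e2 with h2 _
            exact hab (h1.trans h2.symm)
        subst hu2
        simp only [List.nil_append] at e1 e2 f2
        have hv1 : v1 = [] := by
          rcases List.eq_nil_or_concat v1 with h | ⟨v1', g, hv⟩
          · exact h
          · exfalso
            rw [List.concat_eq_append] at hv
            subst hv
            apply hab'
            have h1 : a' = g := by
              have e1' : a :: xt = (c2 :: (w' ++ v1')) ++ [g] := by rw [e1]; simp
              have := List.append_inj' (hx2'.symm.trans e1') rfl
              injection this.2 with h _
            have h2 : b' = g := by
              have e2' : b :: yt = (w' ++ c1 :: v1') ++ [g] := by rw [e2]; simp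
              have := List.append_inj' (hy2'.symm.trans e2') rfl
              injection this.2 with h _
            exact h1.trans h2.symm
        subst hv1
        simp only [List.append_nil] at e1 e2 f2
        injection e1 with h1 h2
        have h3 := List.append_inj' (hy2'.symm.trans e2) rfl
        left
        refine ⟨?_, ?_⟩
        · rw [h2, h3.1]
        · rw [f2, ← h1, ← e2]
  · rintro (⟨hA, rfl⟩ | ⟨hB, rfl⟩)
    · refine ⟨⟨a :: xt, [], b', by simp, ?_⟩, ⟨[], b :: yt, a, rfl, rfl⟩⟩
      rw [List.cons_append, hA]
      simp [← hy2']
    · refine ⟨⟨[], a :: xt, b, rfl, rfl⟩, ⟨b :: yt, [], a', by simp, ?_⟩⟩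
      rw [List.cons_append, hB]
      simp [← hx2']


lemma core_count {x y xt yt xi yi : List Bool} {a b a' b' : Bool}
    (hx1 : x = a :: xt) (hy1 : y = b :: yt) (hx2 : x = xi ++ [a']) (hy2 : y = yi ++ [b'])
    (hab : a ≠ b) (hab' : a' ≠ b') (hne : xt ≠ []) :
    (BD x ∩ BD y).ncard = (BI x ∩ BI y).ncard := by
  rw [core_D hx1 hy1 hx2 hy2 hab hab', core_I hx1 hy1 hx2 hy2 hab hab']
  have hIne : (a :: y) ≠ (b :: x) := by
    intro h
    injection h with h _
    exact hab h
  by_cases hA : xt = yi <;> by_cases hB : yt = xi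
  · -- both conditions hold
    have hD : xt ≠ yt := by
      intro h
      have h1 : b :: yt = yt ++ [b'] := by rw [← hy1, hy2, ← hA, h]
      have h2 : a :: xt = xt ++ [a'] := by rw [← hx1, hx2, ← hB, h]
      obtain ⟨hb1, hb2⟩ := cons_eq_concat h1
      obtain ⟨ha1, ha2⟩ := cons_eq_concat h2
      apply hab
      cases hxt : xt with
      | nil => exact absurd hxt hne
      | cons g t =>
        rw [hxt] at ha2
        rw [h] at hxt
        rw [hxt] at hb2
        rw [List.length_cons, List.replicate_succ] at ha2 hb2
        injection ha2 with hga _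
        injection hb2 with hgb _
        rw [← hga, ← hgb]
    have e1 : {z | (xt = yi ∧ z = xt) ∨ (yt = xi ∧ z = yt)} = {xt, yt} := by
      ext w; simp [hA, hB]
    have e2 : {z | (xt = yi ∧ z = a :: y) ∨ (yt = xi ∧ z = b :: x)} = {a :: y, b :: x} := by
      ext w; simp [hA, hB]
    rw [e1, e2, Set.ncard_pair hD, Set.ncard_pair hIne]
  · have e1 : {z | (xt = yi ∧ z = xt) ∨ (yt = xi ∧ z = yt)} = {xt} := by
      ext w; simp [hA, hB]
    have e2 : {z | (xt = yi ∧ z = a :: y) ∨ (yt = xi ∧ z = b :: x)} = {a :: y} := by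
      ext w; simp [hA, hB]
    rw [e1, e2, Set.ncard_singleton, Set.ncard_singleton]
  · have e1 : {z | (xt = yi ∧ z = xt) ∨ (yt = xi ∧ z = yt)} = {yt} := by
      ext w; simp [hA, hB]
    have e2 : {z | (xt = yi ∧ z = a :: y) ∨ (yt = xi ∧ z = b :: x)} = {b :: x} := by
      ext w; simp [hA, hB]
    rw [e1, e2, Set.ncard_singleton, Set.ncard_singleton]
  · have e1 : {z | (xt = yi ∧ z = xt) ∨ (yt = xi ∧ z = yt)} = (∅ : Set (List Bool)) := by
      ext w; simp [hA, hB]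
    have e2 : {z | (xt = yi ∧ z = a :: y) ∨ (yt = xi ∧ z = b :: x)} = (∅ : Set (List Bool)) := by
      ext w; simp [hA, hB]
    rw [e1, e2]


lemma master : ∀ (n : ℕ) (x y : List Bool), x.length = n → y.length = n → x ≠ y →
    x.count true = y.count true → (BD x ∩ BD y).ncard = (BI x ∩ BI y).ncard := by
  intro n
  induction n using Nat.strong_induction_on with
  | _ n ih =>
  intro x y hxl hyl hxy hc
  cases x with
  | nil =>
    cases y with
    | nil => exact absurd rfl hxy
    | cons b yt => rw [← hxl] at hyl; simp at hyl
  | cons a xt =>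
  cases y with
  | nil => rw [← hyl] at hxl; simp at hxl
  | cons b yt =>
  by_cases hab : a = b
  · -- common head
    subst hab
    have hxy' : xt ≠ yt := fun h => hxy (by rw [h])
    have hc' : xt.count true = yt.count true := by
      simp only [List.count_cons] at hc
      omega
    rw [inter_cons_D a hxy', inter_cons_I a hxy',
        Set.ncard_image_of_injective _ List.cons_injective,
        Set.ncard_image_of_injective _ List.cons_injective]
    have hn : 1 ≤ n := by rw [← hxl]; simp
    exact ih (n - 1) (by omega) xt yt (by simp at hxl; omega) (by simp at hyl; omega) hxy' hc'
  · -- heads differ: look at last characters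
    obtain ⟨xd, a', hx2⟩ : ∃ L g, a :: xt = L ++ [g] := by
      rcases List.eq_nil_or_concat (a :: xt) with h | ⟨L, g, h⟩
      · simp at h
      · exact ⟨L, g, by rw [h, List.concat_eq_append]⟩
    obtain ⟨yd, b', hy2⟩ : ∃ L g, b :: yt = L ++ [g] := by
      rcases List.eq_nil_or_concat (b :: yt) with h | ⟨L, g, h⟩
      · simp at h
      · exact ⟨L, g, by rw [h, List.concat_eq_append]⟩
    by_cases hab' : a' = b'
    · -- common last character: strip via reverse
      subst hab'
      have hxd : xd ≠ yd := fun h => hxy (by rw [hx2, hy2, h])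
      have hxdr : xd.reverse ≠ yd.reverse :=
        fun h => hxd (List.reverse_injective h)
      have hXr : (a :: xt).reverse = a' :: xd.reverse := by rw [hx2]; simp
      have hYr : (b :: yt).reverse = a' :: yd.reverse := by rw [hy2]; simp
      have key : ∀ (B : List Bool → Set (List Bool)),
          (∀ w : List Bool, B w.reverse = List.reverse '' B w) →
          (B (a :: xt) ∩ B (b :: yt)).ncard = (B xd.reverse ∩ B yd.reverse).ncard → True := fun _ _ _ => trivial
      have h1 : (BD (a :: xt) ∩ BD (b :: yt)).ncard
          = (BD xd.reverse ∩ BD yd.reverse).ncard := by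
        calc (BD (a :: xt) ∩ BD (b :: yt)).ncard
            = (List.reverse '' (BD (a :: xt) ∩ BD (b :: yt))).ncard :=
              (Set.ncard_image_of_injective _ List.reverse_injective).symm
          _ = (BD (a :: xt).reverse ∩ BD (b :: yt).reverse).ncard := by
              rw [Set.image_inter List.reverse_injective, BD_reverse, BD_reverse]
          _ = ((a' :: ·) '' (BD xd.reverse ∩ BD yd.reverse)).ncard := by
              rw [hXr, hYr, inter_cons_D a' hxdr]
          _ = (BD xd.reverse ∩ BD yd.reverse).ncard :=
              Set.ncard_image_of_injective _ List.cons_injective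
      have h2 : (BI (a :: xt) ∩ BI (b :: yt)).ncard
          = (BI xd.reverse ∩ BI yd.reverse).ncard := by
        calc (BI (a :: xt) ∩ BI (b :: yt)).ncard
            = (List.reverse '' (BI (a :: xt) ∩ BI (b :: yt))).ncard :=
              (Set.ncard_image_of_injective _ List.reverse_injective).symm
          _ = (BI (a :: xt).reverse ∩ BI (b :: yt).reverse).ncard := by
              rw [Set.image_inter List.reverse_injective, BI_reverse, BI_reverse]
          _ = ((a' :: ·) '' (BI xd.reverse ∩ BI yd.reverse)).ncard := by
              rw [hXr, hYr, inter_cons_I a' hxdr]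
          _ = (BI xd.reverse ∩ BI yd.reverse).ncard :=
              Set.ncard_image_of_injective _ List.cons_injective
      rw [h1, h2]
      have hn : 1 ≤ n := by rw [← hxl]; simp
      have hxl' : xt.length + 1 = n := by simpa using hxl
      have hyl' : yt.length + 1 = n := by simpa using hyl
      have hl1 := congrArg List.length hx2
      have hl2 := congrArg List.length hy2
      simp at hl1 hl2
      have hxdl : xd.reverse.length = n - 1 := by simp; omega
      have hydl : yd.reverse.length = n - 1 := by simp; omega
      apply ih (n - 1) (by omega) _ _ hxdl hydl hxdr
      · have hcx := congrArg (List.count true) hx2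
        have hcy := congrArg (List.count true) hy2
        simp only [List.count_append] at hcx hcy
        rw [List.count_reverse, List.count_reverse]
        rw [hcx, hcy] at hc
        omega
    · -- both first and last characters differ: core case
      have hne : xt ≠ [] := by
        intro h
        subst h
        have : n = 1 := by simpa using hxl.symm
        have : yt = [] := by
          cases yt with
          | nil => rfl
          | cons c l => simp [this] at hyl
        subst this
        cases a <;> cases b <;> simp_all [List.count_cons]
      exact core_count rfl rfl hx2 hy2 hab hab' hne


/-- Proposition: for distinct balanced words, the deletion and insertion balls
have intersections of equal size. -/
theorem stmt13 (n : ℕ) (hn : Even n) (h2 : 2 ≤ n)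
    (x y : List Bool) (hx : x ∈ balanced n) (hy : y ∈ balanced n) (hxy : x ≠ y) :
    (BD x ∩ BD y).ncard = (BI x ∩ BI y).ncard := by
  exact master n x y hx.1 hy.1 hxy (hx.2.trans hy.2.symm)

end BRC
end

section
/- Let n ≥ 2 be even and let x, y be distinct words in U_n. Then |B^DI(x) ∩ B^DI(y)| ∈ {0, 2, 4}, and |B^DI(x) ∩ B^DI(y)| = 4 if and only if x and y are Type-A-confusable. Consequently, for every integer N ≥ 5 and every even n ≥ 2, ρ_b(n,N;B^DI) = n − log2 C(n, n/2). -/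
namespace BRC

/- ==================== auxiliary development ==================== -/

private lemma length_of_mem_BD {x z : List Bool} (h : z ∈ BD x) :
    x.length = z.length + 1 := by
  obtain ⟨u, v, b, hx, hz⟩ := h
  subst hx; subst hz; simp; omega

private lemma length_of_mem_BI {x z : List Bool} (h : z ∈ BI x) :
    z.length = x.length + 1 := by
  obtain ⟨u, v, b, hx, hz⟩ := h
  subst hx; subst hz; simp; omega

private def IsWit (x y u w v : List Bool) (b c : Bool) : Prop :=
  x = u ++ w ++ b :: v ∧ y = u ++ c :: w ++ v

private def HasW (x y : List Bool) : Prop := ∃ u w v b c, IsWit x y u w v b c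

private lemma IsWit.hasW {x y u w v : List Bool} {b c : Bool} (h : IsWit x y u w v b c) :
    HasW x y := ⟨u, w, v, b, c, h⟩

private lemma IsWit.del_mem {x y u w v : List Bool} {b c : Bool} (h : IsWit x y u w v b c) :
    u ++ w ++ v ∈ BD x ∩ BD y := by
  obtain ⟨hx, hy⟩ := h
  exact ⟨⟨u ++ w, v, b, hx, rfl⟩, ⟨u, w ++ v, c, by rw [hy]; simp, by simp⟩⟩

private lemma IsWit.ins_mem {x y u w v : List Bool} {b c : Bool} (h : IsWit x y u w v b c) :
    u ++ c :: w ++ b :: v ∈ BI x ∩ BI y := by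
  obtain ⟨hx, hy⟩ := h
  exact ⟨⟨u, w ++ b :: v, c, by rw [hx]; simp, by simp⟩, ⟨u ++ c :: w, v, b, hy, rfl⟩⟩

private lemma wit_of_mem_BD_inter {x y z : List Bool} (h : z ∈ BD x ∩ BD y) :
    (∃ u w v b c, IsWit x y u w v b c ∧ z = u ++ w ++ v) ∨
    (∃ u w v b c, IsWit y x u w v b c ∧ z = u ++ w ++ v) := by
  obtain ⟨⟨u1, v1, b, hx, hz1⟩, ⟨u2, v2, c, hy, hz2⟩⟩ := h
  have hh : u1 ++ v1 = u2 ++ v2 := by rw [← hz1, ← hz2]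
  rcases List.append_eq_append_iff.1 hh with ⟨w, hw1, hw2⟩ | ⟨w, hw1, hw2⟩
  · right
    refine ⟨u1, w, v2, c, b, ⟨?_, ?_⟩, ?_⟩
    · simp [hy, hw1, List.append_assoc]
    · simp [hx, hw2, List.append_assoc]
    · simp [hz1, hw2, List.append_assoc]
  · left
    refine ⟨u2, w, v1, b, c, ⟨?_, ?_⟩, ?_⟩
    · simp [hx, hw1, List.append_assoc]
    · simp [hy, hw2, List.append_assoc]
    · simp [hz2, hw2, List.append_assoc]

private lemma wit_of_mem_BI_inter {x y z : List Bool} (hxy : x ≠ y) (h : z ∈ BI x ∩ BI y) :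
    (∃ u w v b c, IsWit x y u w v b c ∧ z = u ++ c :: w ++ b :: v) ∨
    (∃ u w v b c, IsWit y x u w v b c ∧ z = u ++ c :: w ++ b :: v) := by
  obtain ⟨⟨u1, v1, b, hx, hz1⟩, ⟨u2, v2, c, hy, hz2⟩⟩ := h
  have hh : u1 ++ b :: v1 = u2 ++ c :: v2 := by rw [← hz1, ← hz2]
  rcases List.append_eq_append_iff.1 hh with ⟨w, hw1, hw2⟩ | ⟨w, hw1, hw2⟩
  · rcases w with _ | ⟨f, w'⟩
    · exfalso
      simp only [List.append_nil] at hw1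
      rw [List.nil_append] at hw2
      obtain ⟨hbc, hv⟩ := List.cons.inj hw2
      exact hxy (by rw [hx, hy, hw1, hv])
    · obtain ⟨hfb, hv⟩ := List.cons.inj hw2
      left
      refine ⟨u1, w', v2, c, b, ⟨?_, ?_⟩, ?_⟩
      · simp [hx, hv, List.append_assoc]
      · simp [hy, hw1, ← hfb, List.append_assoc]
      · simp [hz1, hv, List.append_assoc]
  · rcases w with _ | ⟨f, w'⟩
    · exfalso
      simp only [List.append_nil] at hw1
      rw [List.nil_append] at hw2
      obtain ⟨hbc, hv⟩ := List.cons.inj hw2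
      exact hxy (by rw [hx, hy, hw1, hv])
    · obtain ⟨hfc, hv⟩ := List.cons.inj hw2
      right
      refine ⟨u2, w', v1, b, c, ⟨?_, ?_⟩, ?_⟩
      · simp [hy, hv, List.append_assoc]
      · simp [hx, hw1, ← hfc, List.append_assoc]
      · simp [hz2, hv, List.append_assoc]

private lemma IsWit.strip {x y u w v x' y' : List Bool} {a b c : Bool}
    (h : IsWit x y u w v b c) (hx : x = a :: x') (hy : y = a :: y') (hxy : x ≠ y) :
    ∃ u' w' v' b' c', IsWit x' y' u' w' v' b' c' ∧
      u ++ w ++ v = a :: (u' ++ w' ++ v') ∧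
      u ++ c :: w ++ b :: v = a :: (u' ++ c' :: w' ++ b' :: v') := by
  obtain ⟨h1, h2⟩ := h
  subst hx; subst hy
  rcases u with _ | ⟨e, u'⟩
  · simp only [List.nil_append, List.cons_append] at h1 h2
    obtain ⟨hca, hy'⟩ := List.cons.inj h2
    rcases w with _ | ⟨f, w'⟩
    · exfalso
      simp only [List.nil_append] at h1 hy'
      obtain ⟨hba, hx'⟩ := List.cons.inj h1
      exact hxy (by rw [hx', hy'])
    · simp only [List.cons_append] at h1 hy'
      obtain ⟨hfa, hx'⟩ := List.cons.inj h1
      refine ⟨[], w', v, b, a, ⟨by simpa using hx', by simp [hy', ← hfa]⟩, ?_, ?_⟩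
      · simp [← hfa]
      · simp [← hca, ← hfa]
  · simp only [List.cons_append] at h1 h2
    obtain ⟨hea, hx'⟩ := List.cons.inj h1
    obtain ⟨_, hy'⟩ := List.cons.inj h2
    exact ⟨u', w, v, b, c, ⟨hx', hy'⟩, by simp [← hea], by simp [← hea]⟩

private lemma uniq_aux : ∀ N : ℕ, ∀ x y u1 w1 v1 u2 w2 v2 : List Bool, ∀ b1 c1 b2 c2 : Bool,
    x.length ≤ N → x ≠ y → IsWit x y u1 w1 v1 b1 c1 → IsWit x y u2 w2 v2 b2 c2 →
    u1 ++ w1 ++ v1 = u2 ++ w2 ++ v2 ∧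
    u1 ++ c1 :: w1 ++ b1 :: v1 = u2 ++ c2 :: w2 ++ b2 :: v2 := by
  intro N
  induction N with
  | zero =>
    intro x y u1 w1 v1 u2 w2 v2 b1 c1 b2 c2 hN hxy h1 h2
    exfalso
    have := congrArg List.length h1.1
    simp at this
    omega
  | succ N ih =>
    intro x y u1 w1 v1 u2 w2 v2 b1 c1 b2 c2 hN hxy h1 h2
    rcases x with _ | ⟨a, x'⟩
    · exfalso
      have := congrArg List.length h1.1
      simp at this
    · rcases y with _ | ⟨d, y'⟩
      · exfalso
        have := congrArg List.length h1.2
        simp at this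
      · by_cases had : a = d
        · subst had
          obtain ⟨p1, q1, r1, s1, t1, hw1, hd1, hi1⟩ := h1.strip rfl rfl hxy
          obtain ⟨p2, q2, r2, s2, t2, hw2, hd2, hi2⟩ := h2.strip rfl rfl hxy
          have hxy' : x' ≠ y' := fun hh => hxy (by rw [hh])
          have hlen : x'.length ≤ N := by simp at hN; omega
          obtain ⟨e1, e2⟩ := ih x' y' p1 q1 r1 p2 q2 r2 s1 t1 s2 t2 hlen hxy' hw1 hw2
          constructor
          · rw [hd1, hd2, e1]
          · rw [hi1, hi2, e2]
        · have hu1 : u1 = [] := by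
            rcases u1 with _ | ⟨e, u⟩
            · rfl
            · exfalso
              have h1x := h1.1
              have h1y := h1.2
              simp only [List.cons_append, List.append_assoc] at h1x h1y
              obtain ⟨hae, -⟩ := List.cons.inj h1x
              obtain ⟨hde, -⟩ := List.cons.inj h1y
              exact had (hae.trans hde.symm)
          have hu2 : u2 = [] := by
            rcases u2 with _ | ⟨e, u⟩
            · rfl
            · exfalso
              have h2x := h2.1
              have h2y := h2.2
              simp only [List.cons_append, List.append_assoc] at h2x h2y
              obtain ⟨hae, -⟩ := List.cons.inj h2x
              obtain ⟨hde, -⟩ := List.cons.inj h2y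
              exact had (hae.trans hde.symm)
          subst hu1; subst hu2
          have hx1 : a :: x' = w1 ++ b1 :: v1 := by simpa using h1.1
          have hy1 : d :: y' = c1 :: (w1 ++ v1) := by simpa using h1.2
          have hx2 : a :: x' = w2 ++ b2 :: v2 := by simpa using h2.1
          have hy2 : d :: y' = c2 :: (w2 ++ v2) := by simpa using h2.2
          obtain ⟨hc, hwv⟩ := List.cons.inj (hy1.symm.trans hy2)
          constructor
          · simpa using hwv
          · simp only [List.nil_append, List.cons_append, List.append_assoc]
            rw [hc, ← hx1, ← hx2]

private lemma uniq {x y u1 w1 v1 u2 w2 v2 : List Bool} {b1 c1 b2 c2 : Bool}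
    (hxy : x ≠ y) (h1 : IsWit x y u1 w1 v1 b1 c1) (h2 : IsWit x y u2 w2 v2 b2 c2) :
    u1 ++ w1 ++ v1 = u2 ++ w2 ++ v2 ∧
    u1 ++ c1 :: w1 ++ b1 :: v1 = u2 ++ c2 :: w2 ++ b2 :: v2 :=
  uniq_aux x.length x y u1 w1 v1 u2 w2 v2 b1 c1 b2 c2 le_rfl hxy h1 h2

private def altword : Bool → Bool → ℕ → List Bool
  | _, _, 0 => []
  | a, b, (k+1) => a :: altword b a k

private lemma altrec : ∀ (w1 w2 : List Bool) (b1 b2 c1 c2 : Bool),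
    w1 ++ [b1] = c2 :: w2 → w2 ++ [b2] = c1 :: w1 →
    w1 ++ [b1] = altword c2 c1 (w1.length + 1) := by
  intro w1
  induction w1 with
  | nil =>
    intro w2 b1 b2 c1 c2 h1 h2
    simp only [List.nil_append] at h1
    obtain ⟨hb, hw⟩ := List.cons.inj h1
    simp [altword, hb]
  | cons e w1' ih =>
    intro w2 b1 b2 c1 c2 h1 h2
    simp only [List.cons_append] at h1
    obtain ⟨he, hw⟩ := List.cons.inj h1
    rcases w2 with _ | ⟨f, w2'⟩
    · exfalso
      have := congrArg List.length hw
      simp at this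
    · simp only [List.cons_append] at h2
      obtain ⟨hf, hw2⟩ := List.cons.inj h2
      have hA : w1' ++ [b1] = c1 :: w2' := by rw [hw, hf]
      have hB : w2' ++ [b2] = c2 :: w1' := by rw [hw2, he]
      have := ih w2' b1 b2 c2 c1 hA hB
      simp only [List.cons_append, List.length_cons]
      rw [he, this]
      rfl

private lemma altcount : ∀ (nn : ℕ) (a : Bool),
    (altword a (!a) nn).count true = if a then (nn + 1) / 2 else nn / 2 := by
  intro nn
  induction nn with
  | zero => intro a; simp [altword]
  | succ m ih =>
    intro a
    have : altword a (!a) (m + 1) = a :: altword (!a) (!(!a)) m := by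
      simp [altword, Bool.not_not]
    rw [this, List.count_cons, ih (!a)]
    cases a <;> simp <;> omega

private lemma altlen : ∀ (nn : ℕ) (a b : Bool), (altword a b nn).length = nn := by
  intro nn
  induction nn with
  | zero => intro a b; rfl
  | succ m ih => intro a b; simp [altword, ih]

private lemma alt_pat10 : ∀ m, altword true false (2 * m) = pat10 m := by
  intro m
  induction m with
  | zero => rfl
  | succ k ih =>
    have h1 : 2 * (k + 1) = (2 * k) + 1 + 1 := by ring
    rw [h1]
    show true :: false :: altword true false (2 * k) = pat10 (k + 1)
    rw [ih]
    simp [pat10, List.replicate_succ]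

private lemma alt_pat01 : ∀ m, altword false true (2 * m) = pat01 m := by
  intro m
  induction m with
  | zero => rfl
  | succ k ih =>
    have h1 : 2 * (k + 1) = (2 * k) + 1 + 1 := by ring
    rw [h1]
    show false :: true :: altword false true (2 * k) = pat01 (k + 1)
    rw [ih]
    simp [pat01, List.replicate_succ]

private lemma concat_inj' {p q : List Bool} {a b : Bool} (h : p ++ [a] = q ++ [b]) :
    p = q ∧ a = b := by
  have h1 := congrArg List.getLast? h
  simp only [List.getLast?_concat] at h1
  have h2 := congrArg List.dropLast h
  simp only [List.dropLast_concat] at h2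
  exact ⟨h2, Option.some.inj h1⟩

private lemma IsWit.stripBack {x y u w v x' y' : List Bool} {e b c : Bool}
    (h : IsWit x y u w v b c) (hx : x = x' ++ [e]) (hy : y = y' ++ [e]) (hxy : x ≠ y) :
    HasW x' y' := by
  obtain ⟨h1, h2⟩ := h
  rcases List.eq_nil_or_concat v with hv | ⟨v', g, hv⟩
  · subst hv
    -- x = u ++ w ++ [b], y = u ++ c :: w
    have hxb : x = (u ++ w) ++ [b] := by simpa using h1
    obtain ⟨hx', hbe⟩ := concat_inj' (hx.symm.trans hxb)
    rcases List.eq_nil_or_concat w with hw | ⟨w', g2, hw⟩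
    · subst hw
      exfalso
      have hyc : y = u ++ [c] := by simpa using h2
      obtain ⟨hy', hce⟩ := concat_inj' (hy.symm.trans hyc)
      apply hxy
      rw [hx, hy, hx', hy']
      simp [hbe, hce]
    · subst hw
      have hyc : y = (u ++ c :: w') ++ [g2] := by rw [h2]; simp
      obtain ⟨hy', hge⟩ := concat_inj' (hy.symm.trans hyc)
      refine ⟨u, w', [], g2, c, ?_, ?_⟩
      · rw [hx']; simp
      · rw [hy']; simp
  · subst hv
    have hxb : x = (u ++ w ++ b :: v') ++ [g] := by rw [h1]; simp
    have hyb : y = (u ++ c :: w ++ v') ++ [g] := by rw [h2]; simp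
    obtain ⟨hx', -⟩ := concat_inj' (hx.symm.trans hxb)
    obtain ⟨hy', -⟩ := concat_inj' (hy.symm.trans hyb)
    exact ⟨u, w, v', b, c, hx', hy'⟩

private lemma TypeA.symm {x y : List Bool} (h : TypeA x y) : TypeA y x := by
  obtain ⟨m, hm, u, v, h | h⟩ := h
  · exact ⟨m, hm, u, v, Or.inr ⟨h.2, h.1⟩⟩
  · exact ⟨m, hm, u, v, Or.inl ⟨h.2, h.1⟩⟩

private lemma TypeA.cons {x y : List Bool} (a : Bool) (h : TypeA x y) :
    TypeA (a :: x) (a :: y) := by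
  obtain ⟨m, hm, u, v, h | h⟩ := h
  · exact ⟨m, hm, a :: u, v, Or.inl ⟨by simp [h.1], by simp [h.2]⟩⟩
  · exact ⟨m, hm, a :: u, v, Or.inr ⟨by simp [h.1], by simp [h.2]⟩⟩

private lemma TypeA.concat {x y : List Bool} (e : Bool) (h : TypeA x y) :
    TypeA (x ++ [e]) (y ++ [e]) := by
  obtain ⟨m, hm, u, v, h | h⟩ := h
  · exact ⟨m, hm, u, v ++ [e], Or.inl ⟨by simp [h.1], by simp [h.2]⟩⟩
  · exact ⟨m, hm, u, v ++ [e], Or.inr ⟨by simp [h.1], by simp [h.2]⟩⟩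

private lemma core_typeA {x y : List Bool} {c2 : Bool} (nn : ℕ) (hnn : 1 ≤ nn)
    (hx : x = altword c2 (!c2) nn) (hy : y = altword (!c2) c2 nn)
    (hc : x.count true = y.count true) : TypeA x y := by
  have h1 := altcount nn c2
  have h2 := altcount nn (!c2)
  rw [Bool.not_not] at h2
  rw [← hx] at h1
  rw [← hy] at h2
  have heven : nn % 2 = 0 := by
    cases c2 <;> simp at h1 h2 <;> omega
  obtain ⟨m, hm⟩ : ∃ m, nn = 2 * m := ⟨nn / 2, by omega⟩
  have hm1 : 1 ≤ m := by omega
  cases c2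
  · refine ⟨m, hm1, [], [], Or.inr ⟨?_, ?_⟩⟩
    · rw [hx, hm]; simp [alt_pat01]
    · rw [hy, hm]; simp [alt_pat10]
  · refine ⟨m, hm1, [], [], Or.inl ⟨?_, ?_⟩⟩
    · rw [hx, hm]; simp [alt_pat10]
    · rw [hy, hm]; simp [alt_pat01]

private lemma L_aux : ∀ N : ℕ, ∀ x y u1 w1 v1 u2 w2 v2 : List Bool, ∀ b1 c1 b2 c2 : Bool,
    x.length ≤ N → x ≠ y → x.count true = y.count true →
    IsWit x y u1 w1 v1 b1 c1 → IsWit y x u2 w2 v2 b2 c2 → TypeA x y := by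
  intro N
  induction N with
  | zero =>
    intro x y u1 w1 v1 u2 w2 v2 b1 c1 b2 c2 hN hxy hc h1 h2
    exfalso
    have := congrArg List.length h1.1
    simp at this
    omega
  | succ N ih =>
    intro x y u1 w1 v1 u2 w2 v2 b1 c1 b2 c2 hN hxy hc h1 h2
    rcases x with _ | ⟨a, x'⟩
    · exfalso
      have := congrArg List.length h1.1
      simp at this
    · rcases y with _ | ⟨d, y'⟩
      · exfalso
        have := congrArg List.length h1.2
        simp at this
      · by_cases had : a = d
        · subst had
          obtain ⟨p1, q1, r1, s1, t1, hw1, -, -⟩ := h1.strip rfl rfl hxy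
          obtain ⟨p2, q2, r2, s2, t2, hw2, -, -⟩ := h2.strip rfl rfl (Ne.symm hxy)
          have hxy' : x' ≠ y' := fun hh => hxy (by rw [hh])
          have hlen : x'.length ≤ N := by simp at hN; omega
          have hc' : x'.count true = y'.count true := by
            simp only [List.count_cons] at hc
            omega
          exact (ih x' y' p1 q1 r1 p2 q2 r2 s1 t1 s2 t2 hlen hxy' hc' hw1 hw2).cons a
        · have hu1 : u1 = [] := by
            rcases u1 with _ | ⟨e, u⟩
            · rfl
            · exfalso
              have h1x := h1.1
              have h1y := h1.2
              simp only [List.cons_append, List.append_assoc] at h1x h1y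
              obtain ⟨hae, -⟩ := List.cons.inj h1x
              obtain ⟨hde, -⟩ := List.cons.inj h1y
              exact had (hae.trans hde.symm)
          have hu2 : u2 = [] := by
            rcases u2 with _ | ⟨e, u⟩
            · rfl
            · exfalso
              have h2x := h2.1
              have h2y := h2.2
              simp only [List.cons_append, List.append_assoc] at h2x h2y
              obtain ⟨hde, -⟩ := List.cons.inj h2x
              obtain ⟨hae, -⟩ := List.cons.inj h2y
              exact had (hae.trans hde.symm)
          subst hu1; subst hu2
          obtain ⟨x'', e, hx⟩ : ∃ x'' e, a :: x' = x'' ++ [e] := by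
            rcases List.eq_nil_or_concat (a :: x') with h | ⟨p, g, h⟩
            · exact absurd h (by simp)
            · exact ⟨p, g, by simpa [List.concat_eq_append] using h⟩
          obtain ⟨y'', e2, hy⟩ : ∃ y'' e2, d :: y' = y'' ++ [e2] := by
            rcases List.eq_nil_or_concat (d :: y') with h | ⟨p, g, h⟩
            · exact absurd h (by simp)
            · exact ⟨p, g, by simpa [List.concat_eq_append] using h⟩
          by_cases hee : e = e2
          · subst hee
            obtain ⟨p1, q1, r1, s1, t1, hw1⟩ := h1.stripBack hx hy hxy
            obtain ⟨p2, q2, r2, s2, t2, hw2⟩ := h2.stripBack hy hx (Ne.symm hxy)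
            have hxy'' : x'' ≠ y'' := by
              intro hh
              exact hxy (hx.trans (by rw [hh, ← hy]))
            have hlen : x''.length ≤ N := by
              have := congrArg List.length hx
              simp at this hN
              omega
            have hc'' : x''.count true = y''.count true := by
              have hcx := congrArg (List.count true) hx
              have hcy := congrArg (List.count true) hy
              simp only [List.count_append] at hcx hcy
              omega
            have := (ih x'' y'' p1 q1 r1 p2 q2 r2 s1 t1 s2 t2 hlen hxy'' hc'' hw1 hw2).concat e
            rw [← hx, ← hy] at this
            exact this
          · have hv1 : v1 = [] := by
              rcases List.eq_nil_or_concat v1 with h | ⟨p, g, h⟩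
              · exact h
              · exfalso
                rw [List.concat_eq_append] at h
                subst h
                have hxe : a :: x' = (w1 ++ b1 :: p) ++ [g] := by
                  rw [h1.1]; simp
                have hye : d :: y' = (c1 :: w1 ++ p) ++ [g] := by
                  rw [h1.2]; simp
                obtain ⟨-, h1e⟩ := concat_inj' (hx.symm.trans hxe)
                obtain ⟨-, h2e⟩ := concat_inj' (hy.symm.trans hye)
                exact hee (h1e.trans h2e.symm)
            have hv2 : v2 = [] := by
              rcases List.eq_nil_or_concat v2 with h | ⟨p, g, h⟩
              · exact h
              · exfalso
                rw [List.concat_eq_append] at h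
                subst h
                have hye : d :: y' = (w2 ++ b2 :: p) ++ [g] := by
                  rw [h2.1]; simp
                have hxe : a :: x' = (c2 :: w2 ++ p) ++ [g] := by
                  rw [h2.2]; simp
                obtain ⟨-, h1e⟩ := concat_inj' (hx.symm.trans hxe)
                obtain ⟨-, h2e⟩ := concat_inj' (hy.symm.trans hye)
                exact hee (h1e.trans h2e.symm)
            subst hv1; subst hv2
            have hx1 : a :: x' = w1 ++ [b1] := by simpa using h1.1
            have hy1 : d :: y' = c1 :: w1 := by simpa using h1.2
            have hy2 : d :: y' = w2 ++ [b2] := by simpa using h2.1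
            have hx2 : a :: x' = c2 :: w2 := by simpa using h2.2
            have hca : c2 = a := (List.cons.inj hx2.symm).1
            have hcd : c1 = d := (List.cons.inj hy1.symm).1
            have H1 : w1 ++ [b1] = c2 :: w2 := hx1.symm.trans hx2
            have H2 : w2 ++ [b2] = c1 :: w1 := hy2.symm.trans hy1
            have A1 := altrec w1 w2 b1 b2 c1 c2 H1 H2
            have A2 := altrec w2 w1 b2 b1 c2 c1 H2 H1
            have hlw : w2.length = w1.length := by
              have := congrArg List.length H1
              simp at this
              omega
            have hnot : c1 = !c2 := by
              rw [hca, hcd]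
              cases a <;> cases d <;> simp_all
            refine core_typeA (c2 := c2) (w1.length + 1) (by omega) ?_ ?_ hc
            · rw [hx1, A1, hnot]
            · rw [hy2, A2, hlw, hnot]

private lemma pat10_succ (m : ℕ) : pat10 (m + 1) = true :: false :: pat10 m := by
  simp [pat10, List.replicate_succ]

private lemma pat01_succ (m : ℕ) : pat01 (m + 1) = false :: true :: pat01 m := by
  simp [pat01, List.replicate_succ]

private lemma pat10_concat : ∀ m, pat10 (m + 1) = (true :: pat01 m) ++ [false] := by
  intro m
  induction m with
  | zero => rfl
  | succ k ih =>
    rw [pat10_succ, ih, pat01_succ]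
    simp

private lemma pat01_concat : ∀ m, pat01 (m + 1) = (false :: pat10 m) ++ [true] := by
  intro m
  induction m with
  | zero => rfl
  | succ k ih =>
    rw [pat01_succ, ih, pat10_succ]
    simp

private lemma wits_of_typeA10 {x y u v : List Bool} {k : ℕ}
    (hx : x = u ++ pat10 (k + 1) ++ v) (hy : y = u ++ pat01 (k + 1) ++ v) :
    IsWit x y u (true :: pat01 k) v false false ∧
    IsWit y x u (false :: pat10 k) v true true := by
  refine ⟨⟨?_, ?_⟩, ⟨?_, ?_⟩⟩
  · simp [hx, pat10_concat, List.append_assoc]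
  · simp [hy, pat01_succ, List.append_assoc]
  · simp [hy, pat01_concat, List.append_assoc]
  · simp [hx, pat10_succ, List.append_assoc]

private lemma del_ne {u v : List Bool} {k : ℕ} :
    u ++ (true :: pat01 k) ++ v ≠ u ++ (false :: pat10 k) ++ v := by
  intro h
  rw [List.append_assoc, List.append_assoc] at h
  have := List.append_cancel_left h
  simp at this

private lemma ins_ne {u v : List Bool} {k : ℕ} :
    u ++ false :: (true :: pat01 k) ++ false :: v ≠
    u ++ true :: (false :: pat10 k) ++ true :: v := by
  intro h
  rw [List.append_assoc, List.append_assoc] at h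
  have := List.append_cancel_left h
  simp at this

private lemma BDI_split {x y : List Bool} (hl : x.length = y.length) :
    BDI x ∩ BDI y = (BD x ∩ BD y) ∪ (BI x ∩ BI y) := by
  ext z
  constructor
  · rintro ⟨hzx | hzx, hzy | hzy⟩
    · exact Or.inl ⟨hzx, hzy⟩
    · exfalso
      have e1 := length_of_mem_BD hzx
      have e2 := length_of_mem_BI hzy
      omega
    · exfalso
      have e1 := length_of_mem_BI hzx
      have e2 := length_of_mem_BD hzy
      omega
    · exact Or.inr ⟨hzx, hzy⟩
  · rintro (⟨h1, h2⟩ | ⟨h1, h2⟩)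
    · exact ⟨Or.inl h1, Or.inl h2⟩
    · exact ⟨Or.inr h1, Or.inr h2⟩

private lemma BD_inter_single {x y u w v : List Bool} {b c : Bool} (hxy : x ≠ y)
    (h : IsWit x y u w v b c) (hno : ¬ HasW y x) :
    BD x ∩ BD y = {u ++ w ++ v} := by
  ext z
  simp only [Set.mem_singleton_iff]
  constructor
  · intro hz
    rcases wit_of_mem_BD_inter hz with ⟨u', w', v', b', c', hw, hzz⟩ |
      ⟨u', w', v', b', c', hw, hzz⟩
    · rw [hzz, (uniq hxy hw h).1]
    · exact absurd hw.hasW hno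
  · rintro rfl
    exact h.del_mem

private lemma BI_inter_single {x y u w v : List Bool} {b c : Bool} (hxy : x ≠ y)
    (h : IsWit x y u w v b c) (hno : ¬ HasW y x) :
    BI x ∩ BI y = {u ++ c :: w ++ b :: v} := by
  ext z
  simp only [Set.mem_singleton_iff]
  constructor
  · intro hz
    rcases wit_of_mem_BI_inter hxy hz with ⟨u', w', v', b', c', hw, hzz⟩ |
      ⟨u', w', v', b', c', hw, hzz⟩
    · rw [hzz, (uniq hxy hw h).2]
    · exact absurd hw.hasW hno
  · rintro rfl
    exact h.ins_mem

private lemma BD_inter_pair {x y u w v u' w' v' : List Bool} {b c b' c' : Bool} (hxy : x ≠ y)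
    (h1 : IsWit x y u w v b c) (h2 : IsWit y x u' w' v' b' c') :
    BD x ∩ BD y = {u ++ w ++ v, u' ++ w' ++ v'} := by
  ext z
  simp only [Set.mem_insert_iff, Set.mem_singleton_iff]
  constructor
  · intro hz
    rcases wit_of_mem_BD_inter hz with ⟨u2, w2, v2, b2, c2, hw, hzz⟩ |
      ⟨u2, w2, v2, b2, c2, hw, hzz⟩
    · left; rw [hzz, (uniq hxy hw h1).1]
    · right; rw [hzz, (uniq (Ne.symm hxy) hw h2).1]
  · rintro (rfl | rfl)
    · exact h1.del_mem
    · exact ⟨h2.del_mem.2, h2.del_mem.1⟩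

private lemma BI_inter_pair {x y u w v u' w' v' : List Bool} {b c b' c' : Bool} (hxy : x ≠ y)
    (h1 : IsWit x y u w v b c) (h2 : IsWit y x u' w' v' b' c') :
    BI x ∩ BI y = {u ++ c :: w ++ b :: v, u' ++ c' :: w' ++ b' :: v'} := by
  ext z
  simp only [Set.mem_insert_iff, Set.mem_singleton_iff]
  constructor
  · intro hz
    rcases wit_of_mem_BI_inter hxy hz with ⟨u2, w2, v2, b2, c2, hw, hzz⟩ |
      ⟨u2, w2, v2, b2, c2, hw, hzz⟩
    · left; rw [hzz, (uniq hxy hw h1).2]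
    · right; rw [hzz, (uniq (Ne.symm hxy) hw h2).2]
  · rintro (rfl | rfl)
    · exact h1.ins_mem
    · exact ⟨h2.ins_mem.2, h2.ins_mem.1⟩

private lemma BD_inter_empty {x y : List Bool} (hA : ¬ HasW x y) (hB : ¬ HasW y x) :
    BD x ∩ BD y = ∅ := by
  rw [Set.eq_empty_iff_forall_notMem]
  intro z hz
  rcases wit_of_mem_BD_inter hz with ⟨u, w, v, b, c, hw, -⟩ | ⟨u, w, v, b, c, hw, -⟩
  · exact hA hw.hasW
  · exact hB hw.hasW

private lemma BI_inter_empty {x y : List Bool} (hxy : x ≠ y) (hA : ¬ HasW x y)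
    (hB : ¬ HasW y x) : BI x ∩ BI y = ∅ := by
  rw [Set.eq_empty_iff_forall_notMem]
  intro z hz
  rcases wit_of_mem_BI_inter hxy hz with ⟨u, w, v, b, c, hw, -⟩ | ⟨u, w, v, b, c, hw, -⟩
  · exact hA hw.hasW
  · exact hB hw.hasW

private lemma card4 {x y u v : List Bool} {k : ℕ} (hxy : x ≠ y) (hl : x.length = y.length)
    (h1 : IsWit x y u (true :: pat01 k) v false false)
    (h2 : IsWit y x u (false :: pat10 k) v true true) :
    (BDI x ∩ BDI y).ncard = 4 := by
  have hD := BD_inter_pair hxy h1 h2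
  have hI := BI_inter_pair hxy h1 h2
  have e1 : x.length = (u ++ (true :: pat01 k) ++ v).length + 1 :=
    length_of_mem_BD h1.del_mem.1
  have e2 : y.length = (u ++ (false :: pat10 k) ++ v).length + 1 :=
    length_of_mem_BD h2.del_mem.1
  have e3 : (u ++ false :: (true :: pat01 k) ++ false :: v).length = x.length + 1 :=
    length_of_mem_BI h1.ins_mem.1
  have e4 : (u ++ true :: (false :: pat10 k) ++ true :: v).length = y.length + 1 :=
    length_of_mem_BI h2.ins_mem.1
  have hd12 : u ++ (true :: pat01 k) ++ v ≠ u ++ (false :: pat10 k) ++ v := del_ne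
  have hs12 := ins_ne (u := u) (v := v) (k := k)
  have hd1s1 : u ++ (true :: pat01 k) ++ v ≠ u ++ false :: (true :: pat01 k) ++ false :: v := by
    intro hh
    have := congrArg List.length hh
    omega
  have hd1s2 : u ++ (true :: pat01 k) ++ v ≠ u ++ true :: (false :: pat10 k) ++ true :: v := by
    intro hh
    have := congrArg List.length hh
    omega
  have hd2s1 : u ++ (false :: pat10 k) ++ v ≠ u ++ false :: (true :: pat01 k) ++ false :: v := by
    intro hh
    have := congrArg List.length hh
    omega
  have hd2s2 : u ++ (false :: pat10 k) ++ v ≠ u ++ true :: (false :: pat10 k) ++ true :: v := by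
    intro hh
    have := congrArg List.length hh
    omega
  rw [BDI_split hl, hD, hI, Set.insert_union, Set.singleton_union,
    Set.ncard_insert_of_notMem (by
      simp only [Set.mem_insert_iff, Set.mem_singleton_iff]
      push_neg
      exact ⟨hd12, hd1s1, hd1s2⟩) (Set.toFinite _),
    Set.ncard_insert_of_notMem (by
      simp only [Set.mem_insert_iff, Set.mem_singleton_iff]
      push_neg
      exact ⟨hd2s1, hd2s2⟩) (Set.toFinite _),
    Set.ncard_pair hs12]

private lemma card2 {x y u w v : List Bool} {b c : Bool} (hxy : x ≠ y)
    (hl : x.length = y.length) (h1 : IsWit x y u w v b c) (hno : ¬ HasW y x) :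
    (BDI x ∩ BDI y).ncard = 2 := by
  rw [BDI_split hl, BD_inter_single hxy h1 hno, BI_inter_single hxy h1 hno,
    Set.singleton_union]
  refine Set.ncard_pair ?_
  intro hh
  have := congrArg List.length hh
  simp at this
  omega

private lemma typeA_hasW {x y : List Bool} (h : TypeA x y) : HasW x y ∧ HasW y x := by
  obtain ⟨m, hm, u, v, hcase⟩ := h
  rcases m with _ | k
  · omega
  · rcases hcase with ⟨hx, hy⟩ | ⟨hx, hy⟩
    · obtain ⟨hw1, hw2⟩ := wits_of_typeA10 hx hy
      exact ⟨hw1.hasW, hw2.hasW⟩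
    · obtain ⟨hw1, hw2⟩ := wits_of_typeA10 hy hx
      exact ⟨hw2.hasW, hw1.hasW⟩

private lemma part1 {x y : List Bool} (hxy : x ≠ y) (hl : x.length = y.length)
    (hc : x.count true = y.count true) :
    (BDI x ∩ BDI y).ncard ∈ ({0, 2, 4} : Set ℕ) ∧
      ((BDI x ∩ BDI y).ncard = 4 ↔ TypeA x y) := by
  by_cases hA : HasW x y <;> by_cases hB : HasW y x
  · -- both directions: card 4, TypeA
    obtain ⟨u1, w1, v1, b1, c1, h1⟩ := hA
    obtain ⟨u2, w2, v2, b2, c2, h2⟩ := hB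
    have hTA : TypeA x y :=
      L_aux x.length x y u1 w1 v1 u2 w2 v2 b1 c1 b2 c2 le_rfl hxy hc h1 h2
    have hcard : (BDI x ∩ BDI y).ncard = 4 := by
      obtain ⟨m, hm, u, v, hcase⟩ := hTA
      rcases m with _ | k
      · omega
      · rcases hcase with ⟨hx10, hy01⟩ | ⟨hx01, hy10⟩
        · obtain ⟨hw1, hw2⟩ := wits_of_typeA10 hx10 hy01
          exact card4 hxy hl hw1 hw2
        · obtain ⟨hw1, hw2⟩ := wits_of_typeA10 hy10 hx01
          rw [Set.inter_comm]
          exact card4 (Ne.symm hxy) hl.symm hw1 hw2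
    refine ⟨by rw [hcard]; simp, ?_⟩
    rw [hcard]
    exact iff_of_true rfl hTA
  · obtain ⟨u1, w1, v1, b1, c1, h1⟩ := hA
    have hcard := card2 hxy hl h1 hB
    refine ⟨by rw [hcard]; simp, ?_⟩
    rw [hcard]
    exact iff_of_false (by omega) (fun hTA => hB (typeA_hasW hTA).2)
  · obtain ⟨u1, w1, v1, b1, c1, h1⟩ := hB
    have hcard : (BDI x ∩ BDI y).ncard = 2 := by
      rw [Set.inter_comm]
      exact card2 (Ne.symm hxy) hl.symm h1 hA
    refine ⟨by rw [hcard]; simp, ?_⟩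
    rw [hcard]
    exact iff_of_false (by omega) (fun hTA => hA (typeA_hasW hTA).1)
  · have hcard : (BDI x ∩ BDI y).ncard = 0 := by
      rw [BDI_split hl, BD_inter_empty hA hB, BI_inter_empty hxy hA hB]
      simp
    refine ⟨by rw [hcard]; simp, ?_⟩
    rw [hcard]
    exact iff_of_false (by omega) (fun hTA => hA (typeA_hasW hTA).1)

private lemma card_lists : ∀ n k : ℕ,
    {x : List Bool | x.length = n ∧ x.count true = k}.ncard = n.choose k := by
  intro n
  induction n with
  | zero =>
    intro k
    rcases k with _ | k
    · have hset : {x : List Bool | x.length = 0 ∧ x.count true = 0} = {([] : List Bool)} := by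
        ext z
        rcases z with _ | ⟨a, t⟩ <;> simp
      rw [hset]
      simp
    · have hset : {x : List Bool | x.length = 0 ∧ x.count true = k + 1} = ∅ := by
        ext z
        rcases z with _ | ⟨a, t⟩ <;> simp
      rw [hset]
      simp
  | succ n ih =>
    intro k
    have hfin : ∀ j, {x : List Bool | x.length = n ∧ x.count true = j}.Finite :=
      fun j => (List.finite_length_eq Bool n).subset (fun z hz => hz.1)
    rcases k with _ | k
    · have hset : {x : List Bool | x.length = n + 1 ∧ x.count true = 0} =
          (fun t => false :: t) '' {x | x.length = n ∧ x.count true = 0} := by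
        ext z
        simp only [Set.mem_setOf_eq, Set.mem_image]
        constructor
        · rintro ⟨hlen, hcnt⟩
          rcases z with _ | ⟨a, t⟩
          · simp at hlen
          · cases a
            · exact ⟨t, ⟨by simpa using hlen, by simpa using hcnt⟩, rfl⟩
            · exfalso
              simp [List.count_cons] at hcnt
        · rintro ⟨t, ⟨hl, hc⟩, rfl⟩
          exact ⟨by simp [hl], by simpa [List.count_cons] using hc⟩
      rw [hset, Set.ncard_image_of_injective _ (List.cons_injective), ih 0]
      simp
    · have hset : {x : List Bool | x.length = n + 1 ∧ x.count true = k + 1} =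
          (fun t => true :: t) '' {x | x.length = n ∧ x.count true = k} ∪
          (fun t => false :: t) '' {x | x.length = n ∧ x.count true = k + 1} := by
        ext z
        simp only [Set.mem_setOf_eq, Set.mem_union, Set.mem_image]
        constructor
        · rintro ⟨hlen, hcnt⟩
          rcases z with _ | ⟨a, t⟩
          · simp at hlen
          · cases a
            · right
              exact ⟨t, ⟨by simpa using hlen, by simpa [List.count_cons] using hcnt⟩, rfl⟩
            · left
              refine ⟨t, ⟨by simpa using hlen, ?_⟩, rfl⟩
              simp [List.count_cons] at hcnt
              omega
        · rintro (⟨t, ⟨hl, hc⟩, rfl⟩ | ⟨t, ⟨hl, hc⟩, rfl⟩)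
          · exact ⟨by simp [hl], by simp [List.count_cons, hc]⟩
          · exact ⟨by simp [hl], by simp [List.count_cons, hc]⟩
      have hdisj : Disjoint ((fun t => true :: t) '' {x : List Bool | x.length = n ∧ x.count true = k})
          ((fun t => false :: t) '' {x : List Bool | x.length = n ∧ x.count true = k + 1}) := by
        rw [Set.disjoint_left]
        rintro z ⟨t1, -, rfl⟩ ⟨t2, -, h⟩
        simp at h
      rw [hset, Set.ncard_union_eq hdisj ((hfin k).image _) ((hfin (k + 1)).image _),
        Set.ncard_image_of_injective _ List.cons_injective,
        Set.ncard_image_of_injective _ List.cons_injective, ih k, ih (k + 1),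
        Nat.choose_succ_succ]

/-- Corollary: intersection sizes for `B^DI`, and `ρ_b(n,N;B^DI) = Δ` for `N ≥ 5`. -/
theorem stmt14 (n : ℕ) (hn : Even n) (h2 : 2 ≤ n) :
    (∀ x ∈ balanced n, ∀ y ∈ balanced n, x ≠ y →
      (BDI x ∩ BDI y).ncard ∈ ({0, 2, 4} : Set ℕ) ∧
      ((BDI x ∩ BDI y).ncard = 4 ↔ TypeA x y)) ∧
    (∀ N : ℕ, 5 ≤ N → rho n N BDI = ((n : ℝ) - Real.logb 2 ((n.choose (n / 2) : ℕ) : ℝ))) := by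
  have hbalfin : (balanced n).Finite :=
    (List.finite_length_eq Bool n).subset (fun z hz => hz.1)
  have hcardbal : (balanced n).ncard = n.choose (n / 2) := card_lists n (n / 2)
  have hpart1 : ∀ x ∈ balanced n, ∀ y ∈ balanced n, x ≠ y →
      (BDI x ∩ BDI y).ncard ∈ ({0, 2, 4} : Set ℕ) ∧
      ((BDI x ∩ BDI y).ncard = 4 ↔ TypeA x y) := by
    intro x hx y hy hxy
    exact part1 hxy (hx.1.trans hy.1.symm) (hx.2.trans hy.2.symm)
  refine ⟨hpart1, ?_⟩
  intro N hN
  have hpos : 0 < n.choose (n / 2) := Nat.choose_pos (Nat.div_le_self n 2)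
  have hrecon : reconCode n N BDI (balanced n) := by
    refine ⟨subset_rfl, ?_⟩
    intro x hx y hy hxy
    have h := (hpart1 x hx y hy hxy).1
    simp only [Set.mem_insert_iff, Set.mem_singleton_iff] at h
    omega
  have hmem : ((n : ℝ) - Real.logb 2 ((n.choose (n / 2) : ℕ) : ℝ)) ∈
      {r : ℝ | ∃ C : Set (List Bool),
        reconCode n N BDI C ∧ r = (n : ℝ) - Real.logb 2 (C.ncard : ℝ)} :=
    ⟨balanced n, hrecon, by rw [hcardbal]⟩
  have hlb : ∀ r ∈ {r : ℝ | ∃ C : Set (List Bool),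
      reconCode n N BDI C ∧ r = (n : ℝ) - Real.logb 2 (C.ncard : ℝ)},
      ((n : ℝ) - Real.logb 2 ((n.choose (n / 2) : ℕ) : ℝ)) ≤ r := by
    rintro r ⟨C, hC, rfl⟩
    have hle : C.ncard ≤ n.choose (n / 2) := by
      rw [← hcardbal]
      exact Set.ncard_le_ncard hC.1 hbalfin
    have hlog : Real.logb 2 (C.ncard : ℝ) ≤ Real.logb 2 ((n.choose (n / 2) : ℕ) : ℝ) := by
      rcases Nat.eq_zero_or_pos C.ncard with h0 | h0
      · rw [h0, Nat.cast_zero, Real.logb_zero]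
        exact Real.logb_nonneg one_lt_two (by exact_mod_cast hpos)
      · exact Real.logb_le_logb_of_le one_lt_two (by exact_mod_cast h0) (by exact_mod_cast hle)
    exact sub_le_sub_left hlog _
  exact le_antisymm (csInf_le ⟨_, hlb⟩ hmem) (le_csInf ⟨_, hmem⟩ hlb)

end BRC
end

section
/- Let n ≥ 2 be even and let m be a positive integer with m ≤ n. Then |R_2^b(n,1,m)| ≥ C(n, n/2)·(1 − n·(1/2)^m). In particular, if m = ⌈log2 n⌉ + 1 (and m ≤ n), then |R_2^b(n,1,⌈log2 n⌉ + 1)| ≥ C(n, n/2)/2. -/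
namespace BRC

def listsF : ℕ → Finset (List Bool)
  | 0 => {[]}
  | L + 1 => ((listsF L).image (true :: ·)) ∪ ((listsF L).image (false :: ·))

lemma mem_listsF : ∀ {L : ℕ} {x : List Bool}, x ∈ listsF L ↔ x.length = L := by
  intro L
  induction L with
  | zero => intro x; simp [listsF, List.length_eq_zero_iff]
  | succ L ih =>
    intro x
    cases x with
    | nil => simp [listsF]
    | cons b y =>
      cases b <;> simp [listsF, ih, List.cons_eq_cons]

def cntF (L k : ℕ) : Finset (List Bool) :=
  (listsF L).filter (fun x => x.count true = k)

lemma mem_cntF {L k : ℕ} {x : List Bool} :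
    x ∈ cntF L k ↔ x.length = L ∧ x.count true = k := by
  simp [cntF, mem_listsF]

lemma card_cntF : ∀ L k : ℕ, (cntF L k).card = L.choose k := by
  intro L
  induction L with
  | zero =>
    intro k
    cases k with
    | zero =>
      have : cntF 0 0 = {[]} := by
        ext x; simp [mem_cntF, List.length_eq_zero_iff]
        rintro rfl; simp
      simp [this]
    | succ k =>
      have : cntF 0 (k+1) = ∅ := by
        ext x; simp [mem_cntF, List.length_eq_zero_iff]
        rintro rfl; simp
      simp [this]
  | succ L ih =>
    intro k
    cases k with
    | zero =>
      have : cntF (L+1) 0 = (cntF L 0).image (false :: ·) := by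
        ext x
        cases x with
        | nil => simp [mem_cntF]
        | cons b y =>
          cases b <;> simp [mem_cntF, List.count_cons]
      rw [this, Finset.card_image_of_injective _ (by intro a b h; simpa using h), ih]
      simp
    | succ k =>
      have : cntF (L+1) (k+1) =
          ((cntF L k).image (true :: ·)) ∪ ((cntF L (k+1)).image (false :: ·)) := by
        ext x
        cases x with
        | nil => simp [mem_cntF]
        | cons b y =>
          cases b <;> simp [mem_cntF, List.count_cons]
      rw [this, Finset.card_union_of_disjoint, Finset.card_image_of_injective _
          (by intro a b h; simpa using h), Finset.card_image_of_injective _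
          (by intro a b h; simpa using h), ih, ih, Nat.choose_succ_succ]
      · simp [Finset.disjoint_left]


lemma count_tf (x : List Bool) : x.count true + x.count false = x.length := by
  induction x with
  | nil => simp
  | cons a l ih => cases a <;> simp [List.count_cons] <;> omega

lemma key_ineq (t : ℕ) : ∀ k, k ≤ t → 2 ^ k * (2 * t - k).choose (t - k) ≤ (2 * t).choose t := by
  intro k
  induction k with
  | zero => simp
  | succ k ih =>
    intro hk
    have hk' : k ≤ t := by omega
    refine le_trans ?_ (ih hk')
    have h1 : 2 * t - (k+1) + 1 = 2 * t - k := by omega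
    have h2 : t - (k+1) + 1 = t - k := by omega
    -- 2 * C(a-1, b-1) ≤ C(a,b) with a = 2t-k, b = t-k
    have hmul := Nat.add_one_mul_choose_eq (2 * t - (k+1)) (t - (k+1))
    rw [h1, h2] at hmul
    have hb : 1 ≤ t - k := by omega
    have ha : 2 * (t - k) ≤ 2 * t - k := by omega
    have step : 2 * (2 * t - (k+1)).choose (t - (k+1)) ≤ (2 * t - k).choose (t - k) := by
      have : 2 * (2 * t - (k+1)).choose (t - (k+1)) * (t - k) ≤ (2 * t - k).choose (t - k) * (t - k) := by
        calc 2 * (2 * t - (k+1)).choose (t - (k+1)) * (t - k)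
            = (2 * (t - k)) * (2 * t - (k+1)).choose (t - (k+1)) := by ring
          _ ≤ (2 * t - k) * (2 * t - (k+1)).choose (t - (k+1)) :=
              Nat.mul_le_mul_right _ ha
          _ = (2 * t - k).choose (t - k) * (t - k) := hmul
      exact Nat.le_of_mul_le_mul_right this (by omega)
    calc 2 ^ (k+1) * (2 * t - (k+1)).choose (t - (k+1))
        = 2 ^ k * (2 * (2 * t - (k+1)).choose (t - (k+1))) := by ring
      _ ≤ 2 ^ k * (2 * t - k).choose (t - k) := Nat.mul_le_mul_left _ step



lemma decomp {x : List Bool} {i m : ℕ} {b : Bool}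
    (hb : (x.drop i).take (m+1) = List.replicate (m+1) b) :
    x = x.take i ++ (List.replicate (m+1) b ++ x.drop (i + (m+1))) := by
  conv_lhs => rw [← List.take_append_drop i x]
  congr 1
  conv_lhs => rw [← List.take_append_drop (m+1) (x.drop i)]
  rw [hb, List.drop_drop]
  try ring_nf
  try rw [Nat.add_comm]

lemma card_badAt (n m k i : ℕ) (b : Bool) (hin : i + (m+1) ≤ n) :
    ((cntF n k).filter
        (fun x => (x.drop i).take (m+1) = List.replicate (m+1) b)).card ≤
      (n - (m+1)).choose (k - (if b then m+1 else 0)) := by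
  rw [← card_cntF]
  apply Finset.card_le_card_of_injOn (fun x => x.take i ++ x.drop (i + (m+1)))
  · intro x hx
    rw [Finset.mem_coe, Finset.mem_filter, mem_cntF] at hx
    obtain ⟨⟨hlen, hcnt⟩, hb⟩ := hx
    have hd := decomp hb
    have hcr : (List.replicate (m+1) b).count true = if b then m+1 else 0 := by
      cases b <;> simp [List.count_replicate]
    rw [Finset.mem_coe, mem_cntF]
    constructor
    · simp [List.length_take, List.length_drop, hlen]; omega
    · have := congrArg (List.count true) hd
      simp only [List.count_append, hcr] at this
      rw [hcnt] at this
      simp only [List.count_append]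
      cases b <;> simp at this ⊢ <;> omega
  · intro x1 h1 x2 h2 heq
    simp only [Finset.coe_filter, Set.mem_setOf_eq, mem_cntF] at h1 h2
    obtain ⟨⟨hl1, -⟩, hb1⟩ := h1
    obtain ⟨⟨hl2, -⟩, hb2⟩ := h2
    have ht1 : (x1.take i).length = i := by
      rw [List.length_take]; omega
    have ht2 : (x2.take i).length = i := by
      rw [List.length_take]; omega
    have e1 : x1 = (x1.take i ++ x1.drop (i + (m+1))).take i ++
        (List.replicate (m+1) b ++ (x1.take i ++ x1.drop (i + (m+1))).drop i) := by
      rw [List.take_left' ht1, List.drop_left' ht1]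
      exact decomp hb1
    have e2 : x2 = (x2.take i ++ x2.drop (i + (m+1))).take i ++
        (List.replicate (m+1) b ++ (x2.take i ++ x2.drop (i + (m+1))).drop i) := by
      rw [List.take_left' ht2, List.drop_left' ht2]
      exact decomp hb2
    rw [e1, e2]
    simp only at heq
    rw [heq]



lemma card_bad (n m k : ℕ) (b : Bool) (hmn : m + 1 ≤ n) :
    ((cntF n k).filter (fun x => List.replicate (m+1) b <:+: x)).card ≤
      (n - m) * (n - (m+1)).choose (k - (if b then m+1 else 0)) := by
  have hsub : (cntF n k).filter (fun x => List.replicate (m+1) b <:+: x) ⊆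
      (Finset.range (n - m)).biUnion (fun i => (cntF n k).filter
        (fun x => (x.drop i).take (m+1) = List.replicate (m+1) b)) := by
    intro x hx
    rw [Finset.mem_filter] at hx
    obtain ⟨hx1, s, t, hst⟩ := hx
    have hlen : x.length = n := (mem_cntF.mp hx1).1
    have hls : s.length + (m + 1) ≤ n := by
      have := congrArg List.length hst
      simp at this
      omega
    rw [Finset.mem_biUnion]
    refine ⟨s.length, Finset.mem_range.mpr (by omega), Finset.mem_filter.mpr ⟨hx1, ?_⟩⟩
    rw [← hst, List.append_assoc, List.drop_left,
      List.take_left' (by simp)]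
  calc _ ≤ ((Finset.range (n - m)).biUnion (fun i => (cntF n k).filter
        (fun x => (x.drop i).take (m+1) = List.replicate (m+1) b))).card :=
        Finset.card_le_card hsub
    _ ≤ ∑ i ∈ Finset.range (n - m), ((cntF n k).filter
        (fun x => (x.drop i).take (m+1) = List.replicate (m+1) b)).card :=
        Finset.card_biUnion_le
    _ ≤ ∑ _i ∈ Finset.range (n - m), (n - (m+1)).choose (k - (if b then m+1 else 0)) := by
        apply Finset.sum_le_sum
        intro i hi
        exact card_badAt n m k i b (by rw [Finset.mem_range] at hi; omega)
    _ = (n - m) * (n - (m+1)).choose (k - (if b then m+1 else 0)) := by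
        simp [Finset.sum_const, Nat.smul_one_eq_cast]

/-- Lemma: lower bound on the size of `R_2^b(n,1,m)`. -/
theorem stmt19 (n : ℕ) (hn : Even n) (h2 : 2 ≤ n) :
    (∀ m : ℕ, 1 ≤ m → m ≤ n →
      ((n.choose (n / 2) : ℕ) : ℝ) * (1 - (n : ℝ) * (1 / 2) ^ m) ≤
        ((R1 n m).ncard : ℝ)) ∧
    (Nat.clog 2 n + 1 ≤ n →
      ((n.choose (n / 2) : ℕ) : ℝ) / 2 ≤ ((R1 n (Nat.clog 2 n + 1)).ncard : ℝ)) := by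
  obtain ⟨t, ht⟩ := hn
  have hnt : n = 2 * t := by omega
  have ht2 : n / 2 = t := by omega
  have main : ∀ m : ℕ, 1 ≤ m → m ≤ n →
      ((n.choose (n / 2) : ℕ) : ℝ) * (1 - (n : ℝ) * (1 / 2) ^ m) ≤
        ((R1 n m).ncard : ℝ) := by
    intro m hm1 hm2
    classical
    set RF := (cntF n t).filter
      (fun x => ∀ b : Bool, ¬ (List.replicate (m+1) b <:+: x)) with hRF
    have hR1 : R1 n m = ↑RF := by
      ext x
      simp only [R1, balanced, Set.mem_setOf_eq, hRF, Finset.coe_filter, mem_cntF, ht2]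
    rw [hR1, Set.ncard_coe_finset, ht2]
    have hcntf : ∀ x ∈ cntF n t, ∀ b : Bool, x.count b = t := by
      intro x hx b
      obtain ⟨hl, hc⟩ := mem_cntF.mp hx
      have := count_tf x
      cases b
      · omega
      · exact hc
    by_cases hcase : m + 1 ≤ t
    · -- main counting case
      set Bt := (cntF n t).filter (fun x => List.replicate (m+1) true <:+: x) with hBt
      set Bf := (cntF n t).filter (fun x => List.replicate (m+1) false <:+: x) with hBf
      have hcover : cntF n t ⊆ RF ∪ (Bt ∪ Bf) := by
        intro x hx
        by_cases h : ∀ b : Bool, ¬ (List.replicate (m+1) b <:+: x)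
        · exact Finset.mem_union_left _ (Finset.mem_filter.mpr ⟨hx, h⟩)
        · push_neg at h
          obtain ⟨b, hb⟩ := h
          apply Finset.mem_union_right
          cases b
          · exact Finset.mem_union_right _ (Finset.mem_filter.mpr ⟨hx, hb⟩)
          · exact Finset.mem_union_left _ (Finset.mem_filter.mpr ⟨hx, hb⟩)
      have hcard : n.choose t ≤ RF.card + (Bt.card + Bf.card) := by
        calc n.choose t = (cntF n t).card := (card_cntF n t).symm
          _ ≤ (RF ∪ (Bt ∪ Bf)).card := Finset.card_le_card hcover
          _ ≤ RF.card + (Bt ∪ Bf).card := Finset.card_union_le _ _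
          _ ≤ RF.card + (Bt.card + Bf.card) := by
              have := Finset.card_union_le Bt Bf
              omega
      have hmn : m + 1 ≤ n := by omega
      have hX : (n - (m+1)).choose t = (n - (m+1)).choose (t - (m+1)) := by
        have h1 : t ≤ n - (m+1) := by omega
        rw [← Nat.choose_symm h1]
        congr 1
        omega
      have hBtc : Bt.card ≤ (n - m) * (n - (m+1)).choose (t - (m+1)) := by
        have := card_bad n m t true hmn
        simpa using this
      have hBfc : Bf.card ≤ (n - m) * (n - (m+1)).choose (t - (m+1)) := by
        have := card_bad n m t false hmn
        simp only [if_neg Bool.false_ne_true, Nat.sub_zero] at this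
        rw [← hX]
        simpa using this
      have hkey : 2 ^ (m+1) * (n - (m+1)).choose (t - (m+1)) ≤ n.choose t := by
        have := key_ineq t (m+1) hcase
        rwa [← hnt] at this
      have hbad : 2 ^ m * (Bt.card + Bf.card) ≤ n * n.choose t := by
        calc 2 ^ m * (Bt.card + Bf.card)
            ≤ 2 ^ m * (2 * (n - m) * ((n - (m+1)).choose (t - (m+1)))) := by
              apply Nat.mul_le_mul_left
              calc Bt.card + Bf.card
                  ≤ (n - m) * (n - (m+1)).choose (t - (m+1)) +
                    (n - m) * (n - (m+1)).choose (t - (m+1)) := Nat.add_le_add hBtc hBfc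
                _ = 2 * (n - m) * (n - (m+1)).choose (t - (m+1)) := by ring
          _ = (n - m) * (2 ^ (m+1) * (n - (m+1)).choose (t - (m+1))) := by ring
          _ ≤ (n - m) * n.choose t := Nat.mul_le_mul_left _ hkey
          _ ≤ n * n.choose t := Nat.mul_le_mul_right _ (by omega)
      -- pass to the reals
      have h2m : (0:ℝ) < 2 ^ m := by positivity
      have hcardR : ((n.choose t : ℕ) : ℝ) ≤ (RF.card : ℝ) + ((Bt.card + Bf.card : ℕ) : ℝ) := by
        exact_mod_cast hcard
      have hbadR : (2:ℝ) ^ m * ((Bt.card + Bf.card : ℕ) : ℝ) ≤ (n : ℝ) * ((n.choose t : ℕ) : ℝ) := by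
        exact_mod_cast hbad
      have hB : ((Bt.card + Bf.card : ℕ) : ℝ) ≤ (n:ℝ) * ((n.choose t : ℕ) : ℝ) * (1/2:ℝ)^m := by
        have hstep := mul_le_mul_of_nonneg_left hbadR (le_of_lt (pow_pos (by norm_num : (0:ℝ) < 1/2) m))
        calc ((Bt.card + Bf.card : ℕ) : ℝ)
            = (1/2:ℝ)^m * ((2:ℝ)^m * ((Bt.card + Bf.card : ℕ) : ℝ)) := by
              rw [← mul_assoc, ← mul_pow]
              norm_num
          _ ≤ (1/2:ℝ)^m * ((n : ℝ) * ((n.choose t : ℕ) : ℝ)) := hstep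
          _ = (n:ℝ) * ((n.choose t : ℕ) : ℝ) * (1/2:ℝ)^m := by ring
      have : ((n.choose t : ℕ) : ℝ) * (1 - (n : ℝ) * (1/2)^m)
          = ((n.choose t : ℕ) : ℝ) - (n:ℝ) * ((n.choose t : ℕ) : ℝ) * (1/2:ℝ)^m := by ring
      rw [this]
      linarith
    · -- no long runs possible at all
      have hRFall : RF = cntF n t := by
        apply Finset.filter_true_of_mem
        intro x hx b hcon
        have h1 : (List.replicate (m+1) b).count b ≤ x.count b := hcon.sublist.count_le b
        rw [List.count_replicate_self] at h1
        rw [hcntf x hx b] at h1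
        omega
      rw [hRFall, card_cntF]
      have h0 : (0:ℝ) ≤ (n : ℝ) * (1/2)^m := by positivity
      have hc0 : (0:ℝ) ≤ ((n.choose t : ℕ) : ℝ) := by positivity
      nlinarith
  refine ⟨main, fun h => ?_⟩
  have h1 := main (Nat.clog 2 n + 1) (by omega) h
  have hp : (n:ℝ) ≤ 2 ^ Nat.clog 2 n := by
    exact_mod_cast Nat.le_pow_clog one_lt_two n
  have h2c : (0:ℝ) < 2 ^ Nat.clog 2 n := by positivity
  have hsmall : (n:ℝ) * (1/2) ^ (Nat.clog 2 n + 1) ≤ 1/2 := by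
    rw [pow_succ]
    have : (n:ℝ) * ((1/2:ℝ) ^ Nat.clog 2 n * (1/2))
        = ((n:ℝ) * (1/2:ℝ) ^ Nat.clog 2 n) * (1/2) := by ring
    rw [this]
    have hmain : (n:ℝ) * (1/2:ℝ) ^ Nat.clog 2 n ≤ 1 := by
      have : (2:ℝ) ^ Nat.clog 2 n * (1/2:ℝ) ^ Nat.clog 2 n = 1 := by
        rw [← mul_pow]; norm_num
      nlinarith [pow_pos (by norm_num : (0:ℝ) < 1/2) (Nat.clog 2 n)]
    linarith
  have hc0 : (0:ℝ) ≤ ((n.choose (n/2) : ℕ) : ℝ) := by positivity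
  have : ((n.choose (n/2) : ℕ) : ℝ) / 2 ≤
      ((n.choose (n/2) : ℕ) : ℝ) * (1 - (n : ℝ) * (1/2) ^ (Nat.clog 2 n + 1)) := by
    nlinarith
  linarith


end BRC
end
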